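/- Let E be a separable real Banach space, ε ∈ (0,1), σ > 0 and C, c > 0. Let A be a random bounded linear operator on E and b a random vector in E, defined on a common probability space, such that almost surely the operator norm of A is at most 1 − ε, b is Bochner integrable, and for every integer k ≥ 0 the vector A^k b is Bochner integrable and linearly concentrated around E[A^k b] with observable diameter σ(1−ε)^k and constants C, c. Then almost surely the equation Y = A·Y + b has a unique solution, given by Y = Σ_{k≥0} A^k b = (Id_E − A)^{−1} b, and there exist constants C', c' > 0 depending only on C and c such that Y is linearly concentrated around Σ_{k≥0} E[A^k b] with observable diameter σ/ε and constants C', c'. -/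

import Mathlib

open MeasureTheory ProbabilityTheory Real Filter Topology
open scoped ENNReal NNReal


lemma aux_self_le_exp_half_sq (u : ℝ) : u ≤ Real.exp (u^2/2) := by
  rcases le_or_gt u 0 with h | h
  · exact h.trans (Real.exp_pos _).le
  · have h1 : u ≤ Real.exp (u - 1) := by
      nth_rewrite 1 [show u = 1 + (u-1) by ring]
      rw [add_comm]
      exact Real.add_one_le_exp _
    refine h1.trans (Real.exp_le_exp.mpr (by nlinarith [sq_nonneg (u-1)]))

lemma aux_pow_mul_exp_le (P : ℕ) (hP : 1 ≤ P) {c y : ℝ} (hc : 0 < c) (hy : 0 ≤ y) :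
    y^P * Real.exp (-(c*y^2)) ≤ (Real.sqrt (P/c))^P * Real.exp (-(c/2*y^2)) := by
  have hPpos : (0:ℝ) < P := by exact_mod_cast hP
  have hQ : (0:ℝ) < Real.sqrt (P/c) := Real.sqrt_pos.mpr (by positivity)
  set Q := Real.sqrt (P/c) with hQdef
  have hQ2 : Q^2 = (P:ℝ)/c := Real.sq_sqrt (by positivity)
  have key : y^P ≤ Q^P * Real.exp (c/2*y^2) := by
    have hu := aux_self_le_exp_half_sq (y/Q)
    have hupow : (y/Q)^P ≤ Real.exp ((y/Q)^2/2) ^ P :=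
      pow_le_pow_left₀ (by positivity) hu P
    rw [← Real.exp_nat_mul] at hupow
    have harg : (P:ℝ) * ((y/Q)^2/2) = c/2*y^2 := by
      rw [div_pow, hQ2]
      field_simp
    rw [harg] at hupow
    calc y^P = Q^P * (y/Q)^P := by rw [div_pow]; field_simp
    _ ≤ Q^P * Real.exp (c/2*y^2) :=
        mul_le_mul_of_nonneg_left hupow (by positivity)
  calc y^P * Real.exp (-(c*y^2)) ≤ (Q^P * Real.exp (c/2*y^2)) * Real.exp (-(c*y^2)) :=
        mul_le_mul_of_nonneg_right key (Real.exp_pos _).le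
  _ = Q^P * Real.exp (-(c/2*y^2)) := by
      rw [mul_assoc, ← Real.exp_add]; ring_nf

lemma aux_tsum_geom (c a : ℝ) (hc : 0 < c) (ha : 0 ≤ a) :
    ∑' j : ℕ, ENNReal.ofReal (a * Real.exp (-(c/2)*((j:ℝ)+1))) ≤
      ENNReal.ofReal (a / (Real.exp (c/2) - 1)) := by
  set ρ := Real.exp (-(c/2)) with hρdef
  have hρpos : 0 < ρ := Real.exp_pos _
  have hρlt : ρ < 1 := Real.exp_lt_one_iff.mpr (by linarith)
  have hterm : ∀ j : ℕ, a * Real.exp (-(c/2)*((j:ℝ)+1)) = (a*ρ) * ρ^j := by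
    intro j
    rw [hρdef, ← Real.exp_nat_mul, mul_assoc, ← Real.exp_add]
    congr 2
    ring
  have hsummable : Summable (fun j : ℕ => (a*ρ) * ρ^j) :=
    (summable_geometric_of_lt_one hρpos.le hρlt).mul_left _
  have h1 : ∑' j : ℕ, ENNReal.ofReal (a * Real.exp (-(c/2)*((j:ℝ)+1)))
      = ENNReal.ofReal (∑' j : ℕ, (a*ρ)*ρ^j) := by
    rw [ENNReal.ofReal_tsum_of_nonneg (fun j => by positivity) hsummable]
    exact tsum_congr fun j => by rw [hterm j]
  rw [h1, tsum_mul_left, tsum_geometric_of_lt_one hρpos.le hρlt]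
  apply ENNReal.ofReal_le_ofReal
  have he : (1:ℝ) < Real.exp (c/2) := by
    rw [← Real.exp_zero]; exact Real.exp_lt_exp.mpr (by linarith)
  have hρinv : ρ = (Real.exp (c/2))⁻¹ := by rw [hρdef, ← Real.exp_neg]
  have heq : a * ρ * (1-ρ)⁻¹ = a / (Real.exp (c/2) - 1) := by
    rw [hρinv]
    have h0 : Real.exp (c/2) ≠ 0 := (Real.exp_pos _).ne'
    have h1' : Real.exp (c/2) - 1 ≠ 0 := by linarith
    have h2 : 1 - (Real.exp (c/2))⁻¹ ≠ 0 := by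
      have : (Real.exp (c/2))⁻¹ < 1 := by
        rw [inv_lt_one_iff₀]; right; linarith
      linarith
    field_simp
    
  rw [heq]

lemma moment_bound {Ω : Type} [MeasurableSpace Ω] (μ : Measure Ω) [IsProbabilityMeasure μ]
    (X : Ω → ℝ) (hX : AEStronglyMeasurable X μ) (s C c : ℝ) (hs : 0 < s) (hC : 0 < C)
    (hc : 0 < c)
    (htail : ∀ t : ℝ, 0 < t → μ {ω | t ≤ |X ω|} ≤ ENNReal.ofReal (C * Real.exp (-c * (t/s)^2)))
    (P : ℕ) (hP : 1 ≤ P) :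
    ∫⁻ ω, (‖X ω‖₊ : ℝ≥0∞)^P ∂μ ≤
      ENNReal.ofReal ((s * ((1 + C/(Real.exp (c/2) - 1)) * (2*Real.sqrt (P/c)+1)))^P) := by
  have hexp1 : (1:ℝ) < Real.exp (c/2) := by
    rw [← Real.exp_zero]; exact Real.exp_lt_exp.mpr (by linarith)
  have hKpos : (0:ℝ) < Real.exp (c/2) - 1 := by linarith
  set Q := Real.sqrt (P/c) with hQdef
  have hQpos : 0 < Q := Real.sqrt_pos.mpr (by positivity)
  -- replace X by a measurable representative
  obtain ⟨X', hX'm, hXX'⟩ : ∃ X' : Ω → ℝ, Measurable X' ∧ X =ᵐ[μ] X' :=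
    ⟨hX.aemeasurable.mk X, hX.aemeasurable.measurable_mk, hX.aemeasurable.ae_eq_mk⟩
  have hint_congr : ∫⁻ ω, (‖X ω‖₊ : ℝ≥0∞)^P ∂μ = ∫⁻ ω, (‖X' ω‖₊ : ℝ≥0∞)^P ∂μ := by
    apply lintegral_congr_ae
    filter_upwards [hXX'] with ω h
    rw [h]
  have htail' : ∀ t : ℝ, 0 < t →
      μ {ω | t ≤ |X' ω|} ≤ ENNReal.ofReal (C * Real.exp (-c * (t/s)^2)) := by
    intro t ht
    have hset : {ω | t ≤ |X ω|} =ᵐ[μ] {ω | t ≤ |X' ω|} := by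
      filter_upwards [hXX'] with ω h
      show (t ≤ |X ω|) = (t ≤ |X' ω|)
      rw [h]
    rw [← measure_congr hset]
    exact htail t ht
  rw [hint_congr]
  -- pointwise bound
  have key : ∀ ω, (‖X' ω‖₊ : ℝ≥0∞)^P ≤
      ENNReal.ofReal (s^P) + ∑' j : ℕ,
        Set.indicator {ω' | ((j:ℝ)+1)*s ≤ |X' ω'|}
          (fun _ => ENNReal.ofReal ((((j:ℝ)+2)*s)^P)) ω := by
    intro ω
    have habs : (‖X' ω‖₊ : ℝ≥0∞)^P = ENNReal.ofReal (|X' ω|^P) := by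
      rw [← enorm_eq_nnnorm, Real.enorm_eq_ofReal_abs, ← ENNReal.ofReal_pow (abs_nonneg _)]
    rw [habs]
    rcases le_or_gt (|X' ω|) s with h | h
    · refine le_trans ?_ le_self_add
      exact ENNReal.ofReal_le_ofReal (pow_le_pow_left₀ (abs_nonneg _) h P)
    · set r := |X' ω| with hrdef
      have hr0 : 0 < r := lt_trans hs h
      set m := ⌊r/s⌋₊ with hmdef
      have hm1 : 1 ≤ m := by
        rw [hmdef, Nat.le_floor_iff (by positivity)]
        rw [Nat.cast_one, le_div_iff₀ hs]
        linarith
      have hms : (m:ℝ)*s ≤ r := by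
        rw [← le_div_iff₀ hs]
        exact Nat.floor_le (by positivity)
      have hr : r < ((m:ℝ)+1)*s := by
        rw [← div_lt_iff₀ hs] at *
        exact Nat.lt_floor_add_one _
      refine le_trans ?_ (le_add_of_nonneg_left zero_le)
      have hcast : ((m-1:ℕ):ℝ) = (m:ℝ) - 1 := by
        rw [Nat.cast_sub hm1, Nat.cast_one]
      have hmem : ω ∈ {ω' | (((m-1:ℕ):ℝ)+1)*s ≤ |X' ω'|} := by
        show (((m-1:ℕ):ℝ)+1)*s ≤ |X' ω|
        rw [hcast, show ((m:ℝ)-1+1)*s = (m:ℝ)*s by ring]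
        exact hms
      calc ENNReal.ofReal (r^P)
          ≤ ENNReal.ofReal (((((m-1:ℕ):ℝ)+2)*s)^P) := by
            apply ENNReal.ofReal_le_ofReal
            apply pow_le_pow_left₀ hr0.le
            rw [hcast, show ((m:ℝ)-1+2)*s = ((m:ℝ)+1)*s by ring]
            exact hr.le
        _ = Set.indicator {ω' | (((m-1:ℕ):ℝ)+1)*s ≤ |X' ω'|}
              (fun _ => ENNReal.ofReal ((((((m-1:ℕ):ℝ)+2))*s)^P)) ω := by
            rw [Set.indicator_of_mem hmem]
        _ ≤ ∑' j : ℕ, Set.indicator {ω' | ((j:ℝ)+1)*s ≤ |X' ω'|}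
              (fun _ => ENNReal.ofReal ((((j:ℝ)+2)*s)^P)) ω :=
            ENNReal.le_tsum (m-1)
  -- integrate the pointwise bound
  have hsets : ∀ j : ℕ, MeasurableSet {ω' | ((j:ℝ)+1)*s ≤ |X' ω'|} :=
    fun j => measurableSet_le measurable_const hX'm.abs
  have step1 : ∫⁻ ω, (‖X' ω‖₊ : ℝ≥0∞)^P ∂μ ≤
      ENNReal.ofReal (s^P) + ∑' j : ℕ,
        ENNReal.ofReal ((((j:ℝ)+2)*s)^P) * μ {ω' | ((j:ℝ)+1)*s ≤ |X' ω'|} := by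
    refine le_trans (lintegral_mono key) ?_
    rw [lintegral_add_left measurable_const]
    rw [lintegral_const]
    rw [measure_univ, mul_one]
    apply add_le_add_right
    rw [lintegral_tsum (fun j => ((measurable_const.indicator (hsets j)).aemeasurable))]
    apply le_of_eq
    exact tsum_congr fun j => lintegral_indicator_const (hsets j) _
  -- bound each tail term
  have step2 : ∀ j : ℕ,
      ENNReal.ofReal ((((j:ℝ)+2)*s)^P) * μ {ω' | ((j:ℝ)+1)*s ≤ |X' ω'|} ≤
        ENNReal.ofReal ((s^P * C * (2*Q)^P) * Real.exp (-(c/2)*((j:ℝ)+1))) := by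
    intro j
    have hy : (0:ℝ) ≤ (j:ℝ)+1 := by positivity
    have htj := htail' (((j:ℝ)+1)*s) (by positivity)
    have hdiv : (((j:ℝ)+1)*s/s) = ((j:ℝ)+1) := mul_div_cancel_right₀ _ hs.ne'
    rw [hdiv] at htj
    calc ENNReal.ofReal ((((j:ℝ)+2)*s)^P) * μ {ω' | ((j:ℝ)+1)*s ≤ |X' ω'|}
        ≤ ENNReal.ofReal ((((j:ℝ)+2)*s)^P) *
            ENNReal.ofReal (C * Real.exp (-c * ((j:ℝ)+1)^2)) :=
          mul_le_mul_right htj _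
      _ = ENNReal.ofReal (((((j:ℝ)+2)*s)^P) * (C * Real.exp (-c * ((j:ℝ)+1)^2))) := by
          rw [← ENNReal.ofReal_mul (by positivity)]
      _ ≤ ENNReal.ofReal ((s^P * C * (2*Q)^P) * Real.exp (-(c/2)*((j:ℝ)+1))) := by
          apply ENNReal.ofReal_le_ofReal
          have h1 : (((j:ℝ)+2)*s)^P ≤ s^P * 2^P * ((j:ℝ)+1)^P := by
            rw [show s^P * 2^P * ((j:ℝ)+1)^P = (2*((j:ℝ)+1)*s)^P by rw [mul_pow, mul_pow]; ring]
            apply pow_le_pow_left₀ (by positivity)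
            nlinarith [hs.le, hy]
          have h2 : ((j:ℝ)+1)^P * Real.exp (-(c*((j:ℝ)+1)^2)) ≤
              Q^P * Real.exp (-(c/2*((j:ℝ)+1)^2)) := aux_pow_mul_exp_le P hP hc hy
          have h3 : Real.exp (-(c/2*((j:ℝ)+1)^2)) ≤ Real.exp (-(c/2)*((j:ℝ)+1)) := by
            apply Real.exp_le_exp.mpr
            nlinarith [mul_nonneg (mul_nonneg hc.le (Nat.cast_nonneg j)) hy]
          have h4 : ((j:ℝ)+1)^P * Real.exp (-(c*((j:ℝ)+1)^2)) ≤
              Q^P * Real.exp (-(c/2)*((j:ℝ)+1)) := by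
            refine h2.trans (mul_le_mul_of_nonneg_left h3 (by positivity))
          calc (((j:ℝ)+2)*s)^P * (C * Real.exp (-c * ((j:ℝ)+1)^2))
              ≤ (s^P * 2^P * ((j:ℝ)+1)^P) * (C * Real.exp (-(c * ((j:ℝ)+1)^2))) := by
                rw [neg_mul]
                exact mul_le_mul_of_nonneg_right h1 (by positivity)
            _ = (s^P * 2^P * C) * (((j:ℝ)+1)^P * Real.exp (-(c*((j:ℝ)+1)^2))) := by ring
            _ ≤ (s^P * 2^P * C) * (Q^P * Real.exp (-(c/2)*((j:ℝ)+1))) :=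
                mul_le_mul_of_nonneg_left h4 (by positivity)
            _ = (s^P * C * (2*Q)^P) * Real.exp (-(c/2)*((j:ℝ)+1)) := by
                rw [mul_pow]; ring
  -- sum up
  have step3 : ∑' j : ℕ,
      ENNReal.ofReal ((((j:ℝ)+2)*s)^P) * μ {ω' | ((j:ℝ)+1)*s ≤ |X' ω'|} ≤
        ENNReal.ofReal ((s^P * C * (2*Q)^P) / (Real.exp (c/2) - 1)) :=
    le_trans (ENNReal.tsum_le_tsum step2) (aux_tsum_geom c _ hc (by positivity))
  refine le_trans (step1.trans (add_le_add_right step3 _)) ?_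
  rw [← ENNReal.ofReal_add (by positivity) (by positivity)]
  apply ENNReal.ofReal_le_ofReal
  -- final real inequality
  have hKge : 0 ≤ C/(Real.exp (c/2) - 1) := by positivity
  have e1 : s^P + s^P * C * (2*Q)^P / (Real.exp (c/2) - 1) =
      s^P * (1 + (C/(Real.exp (c/2) - 1)) * (2*Q)^P) := by
    field_simp
  rw [e1]
  set K := C/(Real.exp (c/2) - 1) with hKdef
  have hK : 0 ≤ K := by positivity
  have hPne : P ≠ 0 := by omega
  have hA : (1:ℝ) ≤ (2*Q+1)^P := one_le_pow₀ (by linarith)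
  have hB : (2*Q)^P ≤ (2*Q+1)^P := pow_le_pow_left₀ (by positivity) (by linarith) P
  have hC1 : (1+K) ≤ (1+K)^P := le_self_pow₀ (by linarith) hPne
  calc s^P * (1 + K*(2*Q)^P) ≤ s^P * ((1+K) * (2*Q+1)^P) := by
        refine mul_le_mul_of_nonneg_left ?_ (by positivity)
        calc 1 + K*(2*Q)^P ≤ (2*Q+1)^P + K*(2*Q+1)^P :=
              add_le_add hA (mul_le_mul_of_nonneg_left hB hK)
          _ = (1+K)*(2*Q+1)^P := by ring
    _ ≤ s^P * ((1+K)^P * (2*Q+1)^P) :=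
        mul_le_mul_of_nonneg_left (mul_le_mul_of_nonneg_right hC1 (by positivity)) (by positivity)
    _ = (s*((1+K)*(2*Q+1)))^P := by rw [mul_pow, mul_pow]

def LinearConcentration {E : Type*} [NormedAddCommGroup E] [NormedSpace ℝ E]
    {Ω : Type*} [MeasurableSpace Ω] (μ : Measure Ω) (Z : Ω → E) (Zt : E)
    (σ C c : ℝ) : Prop :=
  ∀ f : E →L[ℝ] ℝ, ‖f‖ ≤ 1 →
    ∀ t : ℝ, 0 < t →
      μ {ω | t ≤ |f (Z ω) - f Zt|} ≤
        ENNReal.ofReal (C * Real.exp (-c * (t / σ) ^ 2))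

lemma pow_apply_norm_le {E : Type} [NormedAddCommGroup E] [NormedSpace ℝ E]
    (T : E →L[ℝ] E) {r : ℝ} (hT : ‖T‖ ≤ r) (k : ℕ) (x : E) :
    ‖(T^k) x‖ ≤ r^k * ‖x‖ := by
  have hr : 0 ≤ r := le_trans (norm_nonneg T) hT
  induction k with
  | zero => simp
  | succ n ih =>
    rw [pow_succ', ContinuousLinearMap.mul_apply]
    calc ‖T ((T^n) x)‖ ≤ ‖T‖ * ‖(T^n) x‖ := T.le_opNorm _
      _ ≤ r * (r^n * ‖x‖) := by
          apply mul_le_mul hT ih (norm_nonneg _) hr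
      _ = r^(n+1) * ‖x‖ := by ring

lemma enn_pow_rpow_inv (y : ℝ≥0∞) (P : ℕ) (hP : P ≠ 0) :
    (y ^ P) ^ ((1:ℝ)/(P:ℝ)) = y := by
  have h : ((P:ℝ)) ≠ 0 := Nat.cast_ne_zero.mpr hP
  rw [← ENNReal.rpow_natCast y P, ← ENNReal.rpow_mul, mul_one_div, div_self h,
    ENNReal.rpow_one]

lemma enn_rpow_inv_pow (y : ℝ≥0∞) (P : ℕ) (hP : P ≠ 0) :
    (y ^ ((1:ℝ)/(P:ℝ))) ^ (P:ℝ) = y := by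
  have h : ((P:ℝ)) ≠ 0 := Nat.cast_ne_zero.mpr hP
  rw [← ENNReal.rpow_mul, one_div, inv_mul_cancel₀ h, ENNReal.rpow_one]

set_option maxHeartbeats 1000000 in
theorem stmt_9 (C c : ℝ) (hC : 0 < C) (hc : 0 < c) :
    ∃ C' c' : ℝ, 0 < C' ∧ 0 < c' ∧
      ∀ (E : Type) (_ : NormedAddCommGroup E) (_ : NormedSpace ℝ E),
        CompleteSpace E → SecondCountableTopology E →
      ∀ (Ω : Type) (_ : MeasureSpace Ω), IsProbabilityMeasure (ℙ : Measure Ω) →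
      ∀ (ε σ : ℝ), 0 < ε → ε < 1 → 0 < σ →
      ∀ (A : Ω → E →L[ℝ] E) (b : Ω → E),
        (∀ᵐ ω ∂(ℙ : Measure Ω), ‖A ω‖ ≤ 1 - ε) →
        Integrable b ℙ →
        (∀ k : ℕ, Integrable (fun ω => (A ω ^ k) (b ω)) ℙ) →
        (∀ k : ℕ,
          LinearConcentration ℙ (fun ω => (A ω ^ k) (b ω))
            (∫ ω, (A ω ^ k) (b ω) ∂ℙ) (σ * (1 - ε) ^ k) C c) →
        (∀ᵐ ω ∂(ℙ : Measure Ω), ∃! y : E, y = A ω y + b ω) ∧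
        (∀ᵐ ω ∂(ℙ : Measure Ω),
          HasSum (fun k => (A ω ^ k) (b ω)) (∑' k, (A ω ^ k) (b ω)) ∧
          (∑' k, (A ω ^ k) (b ω)) = A ω (∑' k, (A ω ^ k) (b ω)) + b ω) ∧
        LinearConcentration ℙ (fun ω => ∑' k, (A ω ^ k) (b ω))
          (∑' k, ∫ ω, (A ω ^ k) (b ω) ∂ℙ) (σ / ε) C' c' := by
  have hexp1 : (1:ℝ) < Real.exp (c/2) := by
    rw [← Real.exp_zero]; exact Real.exp_lt_exp.mpr (by linarith)
  set M₀ : ℝ := 1 + C/(Real.exp (c/2) - 1) with hM₀def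
  have hM₀ : 1 ≤ M₀ := by
    have h0 : 0 ≤ C/(Real.exp (c/2) - 1) := div_nonneg hC.le (by linarith)
    rw [hM₀def]
    linarith
  set M₁ : ℝ := M₀ * (2/Real.sqrt c + 1) with hM₁def
  have hM₁ : 1 ≤ M₁ := by
    have h1 : 0 ≤ 2/Real.sqrt c := by positivity
    rw [hM₁def]
    have h2 := mul_le_mul hM₀ (show (1:ℝ) ≤ 2/Real.sqrt c + 1 by linarith) zero_le_one
      (by linarith : (0:ℝ) ≤ M₀)
    linarith
  have hM₁pos : 0 < M₁ := by linarith
  set c' : ℝ := Real.log 2 / (8 * M₁^2) with hc'def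
  have hc' : 0 < c' := by
    have := Real.log_pos one_lt_two
    positivity
  refine ⟨2, c', two_pos, hc', ?_⟩
  intro E iE1 iE2 hComp hSep Ω iΩ hprob ε σ hε hε1 hσ A b hA hb hInt hconc
  haveI := hComp; haveI := hSep; haveI := hprob
  have h1ε : (0:ℝ) ≤ 1 - ε := by linarith
  have h1ε' : 1 - ε < 1 := by linarith
  -- summability for a.e. ω
  have hsummable : ∀ ω, ‖A ω‖ ≤ 1 - ε → Summable (fun k => (A ω ^ k) (b ω)) := by
    intro ω hω
    exact Summable.of_norm_bounded
      ((summable_geometric_of_lt_one h1ε h1ε').mul_right ‖b ω‖)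
      (fun k => pow_apply_norm_le (A ω) hω k (b ω))
  have hfix : ∀ ω, ‖A ω‖ ≤ 1 - ε →
      (∑' k, (A ω ^ k) (b ω)) = A ω (∑' k, (A ω ^ k) (b ω)) + b ω := by
    intro ω hω
    have Sm := hsummable ω hω
    have h2 : A ω (∑' k, (A ω ^ k) (b ω)) = ∑' k, (A ω ^ (k+1)) (b ω) := by
      rw [(A ω).map_tsum Sm]
      exact tsum_congr fun k => by
        rw [← ContinuousLinearMap.mul_apply, ← pow_succ']
    have h3 := Summable.tsum_eq_zero_add Sm
    rw [h2, h3]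
    simp [add_comm]
  constructor
  · filter_upwards [hA] with ω hω
    refine ⟨∑' k, (A ω ^ k) (b ω), hfix ω hω, ?_⟩
    intro y' hy'
    have hd : y' - (∑' k, (A ω ^ k) (b ω)) = A ω (y' - ∑' k, (A ω ^ k) (b ω)) := by
      rw [map_sub]
      nth_rewrite 1 [hy']
      nth_rewrite 1 [hfix ω hω]
      abel
    have hn : ‖y' - ∑' k, (A ω ^ k) (b ω)‖ ≤ (1-ε) * ‖y' - ∑' k, (A ω ^ k) (b ω)‖ := by
      nth_rewrite 1 [hd]
      calc ‖A ω (y' - ∑' k, (A ω ^ k) (b ω))‖ ≤ ‖A ω‖ * ‖y' - ∑' k, (A ω ^ k) (b ω)‖ :=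
            (A ω).le_opNorm _
        _ ≤ (1-ε) * ‖y' - ∑' k, (A ω ^ k) (b ω)‖ :=
            mul_le_mul_of_nonneg_right hω (norm_nonneg _)
    have h0 : ‖y' - ∑' k, (A ω ^ k) (b ω)‖ = 0 := by
      nlinarith [norm_nonneg (y' - ∑' k, (A ω ^ k) (b ω))]
    rw [← sub_eq_zero]
    exact norm_eq_zero.mp h0
  constructor
  · filter_upwards [hA] with ω hω
    exact ⟨(hsummable ω hω).hasSum, hfix ω hω⟩
  · intro f hf t ht
    set Ytil : E := ∑' k, ∫ ω, (A ω ^ k) (b ω) ∂(ℙ : Measure Ω) with hYtil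
    set X : ℕ → Ω → ℝ :=
      fun k ω => f ((A ω ^ k) (b ω)) - f (∫ ω', (A ω' ^ k) (b ω') ∂ℙ) with hXdef
    have hXmeas : ∀ k, AEStronglyMeasurable (X k) ℙ := fun k =>
      ((f.continuous.comp_aestronglyMeasurable (hInt k).aestronglyMeasurable).sub
        aestronglyMeasurable_const)
    have h10 : (0:ℝ) < 1 - ε := by linarith
    have hσk : ∀ k : ℕ, 0 < σ * (1-ε)^k := fun k => mul_pos hσ (pow_pos h10 k)
    have htailX : ∀ k, ∀ u : ℝ, 0 < u →
        ℙ {ω | u ≤ |X k ω|} ≤ ENNReal.ofReal (C * Real.exp (-c * (u/(σ*(1-ε)^k))^2)) :=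
      fun k u hu => hconc k f hf u hu
    have hER : ∀ k : ℕ, ‖∫ ω, (A ω ^ k) (b ω) ∂ℙ‖ ≤ (1-ε)^k * ∫ ω, ‖b ω‖ ∂ℙ := by
      intro k
      refine le_trans (norm_integral_le_integral_norm _) ?_
      rw [← integral_const_mul]
      refine integral_mono_ae (hInt k).norm (hb.norm.const_mul _) ?_
      filter_upwards [hA] with ω hω
      exact pow_apply_norm_le (A ω) hω k (b ω)
    have hEsummable : Summable (fun k => ∫ ω, (A ω ^ k) (b ω) ∂(ℙ : Measure Ω)) :=
      Summable.of_norm_bounded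
        ((summable_geometric_of_lt_one h1ε h1ε').mul_right _) hER
    set g : Ω → ℝ := fun ω => f (∑' k, (A ω ^ k) (b ω)) - f Ytil with hgdef
    set S : ℕ → Ω → ℝ := fun n ω => ∑ k ∈ Finset.range n, X k ω with hSdef
    have hSmeas : ∀ n, AEStronglyMeasurable (S n) ℙ := fun n =>
      Finset.aestronglyMeasurable_fun_sum _ (fun i _ => hXmeas i)
    have htends : ∀ᵐ ω ∂(ℙ:Measure Ω), Tendsto (fun n => S n ω) atTop (𝓝 (g ω)) := by
      filter_upwards [hA] with ω hω
      have Sm := hsummable ω hω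
      have e1 : ∀ n, S n ω = f (∑ k ∈ Finset.range n, (A ω ^ k) (b ω)) -
          ∑ k ∈ Finset.range n, f (∫ ω', (A ω' ^ k) (b ω') ∂ℙ) := by
        intro n
        rw [map_sum, ← Finset.sum_sub_distrib]
      have t1 : Tendsto (fun n => f (∑ k ∈ Finset.range n, (A ω ^ k) (b ω))) atTop
          (𝓝 (f (∑' k, (A ω ^ k) (b ω)))) :=
        (f.continuous.tendsto _).comp Sm.hasSum.tendsto_sum_nat
      have t2 : Tendsto (fun n => ∑ k ∈ Finset.range n, f (∫ ω', (A ω' ^ k) (b ω') ∂ℙ))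
          atTop (𝓝 (f Ytil)) :=
        (hEsummable.hasSum.mapL f).tendsto_sum_nat
      exact Tendsto.congr (fun n => (e1 n).symm) (t1.sub t2)
    have hgmeas : AEStronglyMeasurable g ℙ :=
      aestronglyMeasurable_of_tendsto_ae atTop hSmeas htends
    set s : ℝ := t * ε / σ with hsdef
    have hs : 0 < s := by positivity
    have hts : t / (σ/ε) = s := by rw [hsdef, div_div_eq_mul_div]
    rw [hts]
    rcases le_or_gt s (2*M₁) with hcase | hcase
    · calc ℙ {ω | t ≤ |g ω|} ≤ 1 := prob_le_one
        _ ≤ ENNReal.ofReal (2 * Real.exp (-c' * s^2)) := by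
            rw [← ENNReal.ofReal_one]
            apply ENNReal.ofReal_le_ofReal
            have hlog2 := Real.log_pos one_lt_two
            have h1 : c' * s^2 ≤ Real.log 2 := by
              rw [hc'def]
              rw [div_mul_eq_mul_div, div_le_iff₀ (by positivity)]
              have h0 : s^2 ≤ 4*M₁^2 := by nlinarith
              nlinarith [mul_le_mul_of_nonneg_left h0 hlog2.le]
            have h2 : Real.exp (-(Real.log 2)) ≤ Real.exp (-c' * s^2) := by
              apply Real.exp_le_exp.mpr
              linarith
            rw [Real.exp_neg, Real.exp_log two_pos] at h2
            linarith
    · set x : ℝ := s^2/(4*M₁^2) with hxdef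
      have hx1 : 1 < x := by
        rw [hxdef, lt_div_iff₀ (by positivity)]
        nlinarith
      set P : ℕ := ⌈x⌉₊ with hPdef
      have hP1 : 1 ≤ P := by
        rw [hPdef]
        exact Nat.ceil_pos.mpr (by linarith)
      have hPge : x ≤ (P:ℝ) := Nat.le_ceil x
      have hPlt : (P:ℝ) < x + 1 := Nat.ceil_lt_add_one (by linarith)
      have hPle2 : (P:ℝ) ≤ s^2/(2*M₁^2) := by
        have : x + 1 ≤ 2*x := by linarith
        have h2 : 2*x = s^2/(2*M₁^2) := by rw [hxdef]; field_simp; ring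
        linarith
      have hPne : P ≠ 0 := by omega
      have hPne' : ((P:ℝ≥0∞)) ≠ 0 := by exact_mod_cast hPne
      have hPnt : ((P:ℝ≥0∞)) ≠ ⊤ := ENNReal.natCast_ne_top P
      set B : ℝ := M₀ * (2*Real.sqrt ((P:ℝ)/c)+1) with hBdef
      have hQpos : 0 < Real.sqrt ((P:ℝ)/c) := Real.sqrt_pos.mpr (by positivity)
      have hM₀pos : 0 < M₀ := by linarith
      have hBpos : 0 < B := by rw [hBdef]; positivity
      have hmom : ∀ k : ℕ, eLpNorm (X k) P ℙ ≤ ENNReal.ofReal ((σ*(1-ε)^k) * B) := by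
        intro k
        have hm := moment_bound ℙ (X k) (hXmeas k) (σ*(1-ε)^k) C c (hσk k) hC hc
          (htailX k) P hP1
        rw [eLpNorm_eq_lintegral_rpow_enorm_toReal hPne' hPnt, ENNReal.toReal_natCast]
        have hre : ∫⁻ ω, ‖X k ω‖ₑ ^ ((P:ℕ):ℝ) ∂ℙ = ∫⁻ ω, (‖X k ω‖₊:ℝ≥0∞) ^ P ∂ℙ :=
          lintegral_congr fun ω => by rw [ENNReal.rpow_natCast]; rfl
        rw [hre]
        calc (∫⁻ ω, (‖X k ω‖₊:ℝ≥0∞) ^ P ∂ℙ) ^ ((1:ℝ)/(P:ℝ))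
            ≤ (ENNReal.ofReal (((σ*(1-ε)^k) * ((1 + C/(Real.exp (c/2) - 1)) *
                (2*Real.sqrt ((P:ℝ)/c)+1)))^P)) ^ ((1:ℝ)/(P:ℝ)) :=
              ENNReal.rpow_le_rpow hm (by positivity)
          _ = ENNReal.ofReal ((σ*(1-ε)^k) * B) := by
              rw [ENNReal.ofReal_pow (by positivity), enn_pow_rpow_inv _ P hPne, hBdef, hM₀def]
      set R : ℝ := σ/ε * B with hRdef
      have hRpos : 0 < R := by rw [hRdef]; positivity
      have hSbound : ∀ n, eLpNorm (S n) P ℙ ≤ ENNReal.ofReal R := by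
        intro n
        have hSeq : S n = ∑ k ∈ Finset.range n, X k := by
          funext ω
          rw [hSdef, Finset.sum_apply]
        rw [hSeq]
        refine le_trans (eLpNorm_sum_le (fun i _ => hXmeas i) ?_) ?_
        · exact_mod_cast Nat.one_le_cast.mpr hP1
        · calc ∑ k ∈ Finset.range n, eLpNorm (X k) P ℙ
              ≤ ∑ k ∈ Finset.range n, ENNReal.ofReal ((σ*(1-ε)^k) * B) :=
                Finset.sum_le_sum fun k _ => hmom k
            _ = ENNReal.ofReal (∑ k ∈ Finset.range n, (σ*(1-ε)^k) * B) :=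
                (ENNReal.ofReal_sum_of_nonneg fun k _ => by positivity).symm
            _ ≤ ENNReal.ofReal R := by
                apply ENNReal.ofReal_le_ofReal
                have hgs : ∑ k ∈ Finset.range n, (1-ε)^k ≤ ε⁻¹ := by
                  have h1 := Summable.sum_le_tsum (Finset.range n) (fun k _ => by positivity)
                    (summable_geometric_of_lt_one h1ε h1ε')
                  rw [tsum_geometric_of_lt_one h1ε h1ε'] at h1
                  have h2 : 1 - (1-ε) = ε := by ring
                  rwa [h2] at h1
                calc ∑ k ∈ Finset.range n, (σ*(1-ε)^k) * B
                    = (σ*B) * ∑ k ∈ Finset.range n, (1-ε)^k := by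
                      rw [Finset.mul_sum]
                      exact Finset.sum_congr rfl fun k _ => by ring
                  _ ≤ (σ*B) * ε⁻¹ := mul_le_mul_of_nonneg_left hgs (by positivity)
                  _ = R := by rw [hRdef]; field_simp
      have hSint : ∀ n, ∫⁻ ω, (‖S n ω‖₊:ℝ≥0∞)^P ∂ℙ ≤ ENNReal.ofReal (R^P) := by
        intro n
        have h1 := hSbound n
        rw [eLpNorm_eq_lintegral_rpow_enorm_toReal hPne' hPnt, ENNReal.toReal_natCast] at h1
        have hre : ∫⁻ ω, ‖S n ω‖ₑ ^ ((P:ℕ):ℝ) ∂ℙ = ∫⁻ ω, (‖S n ω‖₊:ℝ≥0∞) ^ P ∂ℙ :=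
          lintegral_congr fun ω => by rw [ENNReal.rpow_natCast]; rfl
        rw [hre] at h1
        have h2 := ENNReal.rpow_le_rpow h1 (show (0:ℝ) ≤ (P:ℝ) by positivity)
        rw [enn_rpow_inv_pow _ P hPne] at h2
        calc ∫⁻ ω, (‖S n ω‖₊:ℝ≥0∞)^P ∂ℙ ≤ (ENNReal.ofReal R) ^ ((P:ℕ):ℝ) := h2
          _ = ENNReal.ofReal (R^P) := by
              rw [ENNReal.rpow_natCast, ← ENNReal.ofReal_pow hRpos.le]
      have hgint : ∫⁻ ω, (‖g ω‖₊:ℝ≥0∞)^P ∂ℙ ≤ ENNReal.ofReal (R^P) := by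
        have hcongr : ∫⁻ ω, (‖g ω‖₊:ℝ≥0∞)^P ∂ℙ =
            ∫⁻ ω, liminf (fun n => (‖S n ω‖₊:ℝ≥0∞)^P) atTop ∂ℙ := by
          apply lintegral_congr_ae
          filter_upwards [htends] with ω hω
          have hcont : Tendsto (fun n => (‖S n ω‖₊:ℝ≥0∞)^P) atTop (𝓝 ((‖g ω‖₊:ℝ≥0∞)^P)) := by
            have h0 : Tendsto (fun n => (‖S n ω‖₊:ℝ≥0∞)) atTop (𝓝 ((‖g ω‖₊:ℝ≥0∞))) :=
              ((ENNReal.continuous_coe.comp continuous_nnnorm).tendsto _).comp hω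
            exact ENNReal.Tendsto.pow h0
          exact hcont.liminf_eq.symm
        rw [hcongr]
        refine le_trans (lintegral_liminf_le' fun n => ((hSmeas n).enorm.pow_const P)) ?_
        exact liminf_le_of_frequently_le' (Frequently.of_forall hSint)
      have hmarkov : ℙ {ω | t ≤ |g ω|} ≤ ENNReal.ofReal ((R/t)^P) := by
        have hsub : {ω | t ≤ |g ω|} ⊆ {ω | ENNReal.ofReal (t^P) ≤ (‖g ω‖₊:ℝ≥0∞)^P} := by
          intro ω hω
          show ENNReal.ofReal (t^P) ≤ _
          rw [← enorm_eq_nnnorm, Real.enorm_eq_ofReal_abs, ENNReal.ofReal_pow ht.le]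
          exact pow_le_pow_left' (ENNReal.ofReal_le_ofReal hω) P
        have h1 := mul_meas_ge_le_lintegral₀ (hgmeas.enorm.pow_const P)
          (ENNReal.ofReal (t^P))
        have h2 : ENNReal.ofReal (t^P) * ℙ {ω | t ≤ |g ω|} ≤ ENNReal.ofReal (R^P) :=
          le_trans (mul_le_mul_right (measure_mono hsub) _) (le_trans h1 hgint)
        have h3 : (R/t)^P = R^P/t^P := div_pow R t P
        rw [h3, ENNReal.ofReal_div_of_pos (by positivity : (0:ℝ) < t^P)]
        rw [ENNReal.le_div_iff_mul_le
          (Or.inl (by simp [ENNReal.ofReal_eq_zero, not_le]; positivity))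
          (Or.inl ENNReal.ofReal_ne_top)]
        rwa [mul_comm]
      refine le_trans hmarkov ?_
      apply ENNReal.ofReal_le_ofReal
      have hRt : R/t = B/s := by
        rw [hRdef, hsdef]
        field_simp
      rw [hRt]
      have hsqrtP : Real.sqrt ((P:ℝ)/c) = Real.sqrt (P:ℝ) / Real.sqrt c :=
        Real.sqrt_div (by positivity) c
      have hsP1 : (1:ℝ) ≤ Real.sqrt (P:ℝ) := Real.one_le_sqrt.mpr (by exact_mod_cast hP1)
      have hBle : B ≤ Real.sqrt (P:ℝ) * M₁ := by
        rw [hBdef, hM₁def, hsqrtP]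
        have hsc : 0 < Real.sqrt c := Real.sqrt_pos.mpr hc
        have h0 : 0 ≤ 2/Real.sqrt c := by positivity
        have key : 2*(Real.sqrt (P:ℝ)/Real.sqrt c)+1 ≤ Real.sqrt (P:ℝ) * (2/Real.sqrt c + 1) := by
          have hexpand : Real.sqrt (P:ℝ) * (2/Real.sqrt c + 1) =
              2*(Real.sqrt (P:ℝ)/Real.sqrt c) + Real.sqrt (P:ℝ) := by ring
          rw [hexpand]
          linarith
        calc M₀ * (2*(Real.sqrt (P:ℝ)/Real.sqrt c)+1)
            ≤ M₀ * (Real.sqrt (P:ℝ) * (2/Real.sqrt c + 1)) :=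
              mul_le_mul_of_nonneg_left key hM₀pos.le
          _ = Real.sqrt (P:ℝ) * (M₀ * (2/Real.sqrt c + 1)) := by ring
      set ρ : ℝ := Real.exp (-(Real.log 2)/2) with hρdef
      have hρpos : 0 < ρ := Real.exp_pos _
      have hρsq : ρ^2 = 2⁻¹ := by
        rw [hρdef, ← Real.exp_nat_mul]
        rw [show ((2:ℕ):ℝ) * (-(Real.log 2)/2) = -(Real.log 2) by push_cast; ring]
        rw [Real.exp_neg, Real.exp_log two_pos]
      have hq : B/s ≤ ρ := by
        have hq0 : 0 ≤ B/s := by positivity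
        have hqsq : (B/s)^2 ≤ ρ^2 := by
          rw [hρsq, div_pow, div_le_iff₀ (by positivity)]
          have hB2 : B^2 ≤ (P:ℝ) * M₁^2 := by
            calc B^2 ≤ (Real.sqrt (P:ℝ) * M₁)^2 := pow_le_pow_left₀ hBpos.le hBle 2
              _ = (P:ℝ)*M₁^2 := by rw [mul_pow, Real.sq_sqrt (by positivity)]
          have h5 : (P:ℝ) * M₁^2 ≤ s^2/2 := by
            have := mul_le_mul_of_nonneg_right hPle2 (by positivity : (0:ℝ) ≤ M₁^2)
            calc (P:ℝ)*M₁^2 ≤ s^2/(2*M₁^2)*M₁^2 := this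
              _ = s^2/2 := by field_simp
          calc B^2 ≤ s^2/2 := le_trans hB2 h5
            _ = 2⁻¹ * s^2 := by ring
        calc B/s = Real.sqrt ((B/s)^2) := (Real.sqrt_sq hq0).symm
          _ ≤ Real.sqrt (ρ^2) := Real.sqrt_le_sqrt hqsq
          _ = ρ := Real.sqrt_sq hρpos.le
      calc (B/s)^P ≤ ρ^P := pow_le_pow_left₀ (by positivity) hq P
        _ = Real.exp ((P:ℝ) * (-(Real.log 2)/2)) := (Real.exp_nat_mul _ P).symm
        _ ≤ 2 * Real.exp (-c' * s^2) := by
            have hlog2 := Real.log_pos one_lt_two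
            have harg : (P:ℝ) * (-(Real.log 2)/2) ≤ -c' * s^2 := by
              have h6 : c' * s^2 ≤ (Real.log 2/2) * (P:ℝ) := by
                have h7 : c' * s^2 = (Real.log 2/2) * x := by
                  rw [hc'def, hxdef]
                  field_simp
                  ring
                rw [h7]
                exact mul_le_mul_of_nonneg_left hPge (by positivity)
              nlinarith
            calc Real.exp ((P:ℝ) * (-(Real.log 2)/2)) ≤ Real.exp (-c' * s^2) :=
                Real.exp_le_exp.mpr harg
              _ ≤ 2 * Real.exp (-c' * s^2) := by nlinarith [Real.exp_pos (-c' * s^2)]
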